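/- Let Δ : A → A be a σ̃-derivation, let m ∈ ℕ, and let f_0, …, f_m ∈ A be such that for every g ∈ A and every k ∈ {0, 1, …, m} one has g·f_k = Σ_{j=k}^{m} f_j·π_k^j(g) (the condition that Σ_{k=0}^m f_k x^k lies in the centralizer of A in the Ore extension A[x; σ̃, Δ]). Then f_m vanishes on Sep^m(X), i.e. f_m(x) = 0 for every x ∈ X with σ^m(x) ≠ x. -/

import Mathlib

/-- The maps `π_k^j` of Richter et al.: `piMap s d j k = π_k^j`, defined by
`π_0^0 = id`, `π_k^j = 0` for `k > j`, and `π_k^j = s ∘ π_{k-1}^{j-1} + d ∘ π_k^{j-1}`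
(where `π_{k-1}^{j-1}` is interpreted as `0` when `k = 0`). -/
def piMap {A : Type*} [Zero A] [Add A] (s d : A → A) : ℕ → ℕ → A → A
  | 0, 0 => id
  | 0, _ + 1 => fun _ => 0
  | j + 1, 0 => fun g => d (piMap s d j 0 g)
  | j + 1, k + 1 => fun g => s (piMap s d j k g) + d (piMap s d j (k + 1) g)

lemma piMap_zero_of_lt {n : ℕ} (σ : Equiv.Perm (Fin n))
    (Δ : (Fin n → ℝ) →ₗ[ℝ] (Fin n → ℝ)) :
    ∀ j k, j < k → ∀ g, piMap (fun h => h ∘ ⇑σ.symm) (⇑Δ) j k g = 0 := by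
  intro j
  induction j with
  | zero => intro k hk g; obtain ⟨k, rfl⟩ := Nat.exists_eq_add_of_lt hk; rfl
  | succ j ih =>
    intro k hk g
    obtain ⟨k, rfl⟩ : ∃ k', k = k' + 1 := ⟨k - 1, by omega⟩
    show (piMap _ _ j k g) ∘ ⇑σ.symm + Δ (piMap _ _ j (k+1) g) = 0
    rw [ih k (by omega) g, ih (k+1) (by omega) g, map_zero]
    ext y; simp

lemma piMap_diag {n : ℕ} (σ : Equiv.Perm (Fin n))
    (Δ : (Fin n → ℝ) →ₗ[ℝ] (Fin n → ℝ)) :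
    ∀ j g, piMap (fun h => h ∘ ⇑σ.symm) (⇑Δ) j j g = g ∘ ⇑(σ ^ j).symm := by
  intro j
  induction j with
  | zero => intro g; ext y; simp [piMap]; rfl
  | succ j ih =>
    intro g
    show (piMap _ _ j j g) ∘ ⇑σ.symm + Δ (piMap _ _ j (j+1) g) = _
    rw [ih g, piMap_zero_of_lt σ Δ j (j+1) (by omega) g, map_zero]
    ext y
    simp only [pow_succ', Pi.add_apply, Pi.zero_apply, Function.comp_apply, add_zero]
    apply congrArg
    apply (σ * σ ^ j).injective
    simp [Equiv.Perm.mul_apply]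

theorem stmt6 (n : ℕ) (hn : 1 ≤ n) (σ : Equiv.Perm (Fin n))
    (Δ : (Fin n → ℝ) →ₗ[ℝ] (Fin n → ℝ))
    (hΔ : ∀ f g : Fin n → ℝ, Δ (f * g) = (f ∘ ⇑σ.symm) * Δ g + Δ f * g)
    (m : ℕ) (f : ℕ → Fin n → ℝ)
    (hc : ∀ g : Fin n → ℝ, ∀ k ≤ m,
      g * f k = ∑ j ∈ Finset.Icc k m, f j * piMap (fun h => h ∘ ⇑σ.symm) (⇑Δ) j k g) :
    ∀ x : Fin n, (σ ^ m) x ≠ x → f m x = 0 := by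
  intro x hx
  set g : Fin n → ℝ := fun y => if y = x then 1 else 0 with hg
  have h := hc g m le_rfl
  rw [Finset.Icc_self, Finset.sum_singleton, piMap_diag σ Δ m g] at h
  have h2 := congrFun h x
  have hsx : (σ ^ m).symm x ≠ x := by
    intro hh
    apply hx
    conv_lhs => rw [← hh]
    simp
  simpa [hg, hsx] using h2
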